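/- Given two sorted (non-increasing) 0-1 sequences x̄ and ȳ with |ȳ| ≤ ⌊k/2⌋, |x̄| ≤ ⌊k/2⌋ + 2, and |ȳ|₁ ≤ |x̄|₁ ≤ |ȳ|₁ + 4 (where |·|₁ counts the number of 1s), define the sequence a of length s = |x̄| + |ȳ| by: for even j = 2i, a_j = max(max(x(i+2), y(i)), min(x(i+1), y(i−1))), and for odd j = 2i−1, a_j = min(max(x(i+1), y(i−1)), min(x(i), y(i−2))), where x(i) = 0 if i > |x̄| else x_i, and y(i) = 1 if i < 1, 0 if i > |ȳ|, else y_i. Then a is sorted (non-increasing) and is a permutation of the multiset x̄ :: ȳ. -/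

import Mathlib

lemma range'_concat1 (s n : ℕ) : List.range' s (n+1) = List.range' s n ++ [s+n] := by
  have : List.range' s (n+1) = List.range' s n ++ [s + 1 * n] := List.range'_concat
  simpa using this

lemma sorted_char (n : ℕ) (f : ℕ → Bool) (hs : ∀ i j, 1 ≤ i → i ≤ j → j ≤ n → f j ≤ f i) :
    ∀ i, 1 ≤ i → i ≤ n → f i = decide (i ≤ (List.range' 1 n).countP f) := by
  induction n with
  | zero => intro i h1 h2; omega
  | succ n ih =>
    have hc : (List.range' 1 (n+1)).countP f
        = (List.range' 1 n).countP f + (if f (n+1) then 1 else 0) := by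
      rw [range'_concat1, List.countP_append]
      simp [List.countP_cons, Nat.add_comm 1 n]
    have hlen : (List.range' 1 n).countP f ≤ n := by
      have := List.countP_le_length (l := List.range' 1 n) (p := f)
      simpa using this
    by_cases hf : f (n+1) = true
    · intro i h1 h2
      have hall : f i = true := by
        have := hs i (n+1) h1 (by omega) (le_refl _)
        rw [hf] at this
        exact Bool.eq_true_of_true_le this
      have hcnt : (List.range' 1 (n+1)).countP f = n+1 := by
        have hall2 : ∀ a ∈ List.range' 1 (n+1), f a = true := by
          intro a ha
          have := List.mem_range'_1.mp ha
          have := hs a (n+1) this.1 (by omega) (le_refl _)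
          rw [hf] at this
          exact Bool.eq_true_of_true_le this
        have := (List.countP_eq_length (p := f) (l := List.range' 1 (n+1))).mpr hall2
        simpa using this
      rw [hall, hcnt]
      simp [h2]
    · have hf' : f (n+1) = false := by simpa using hf
      have hcnt : (List.range' 1 (n+1)).countP f = (List.range' 1 n).countP f := by
        rw [hc, hf']; simp
      intro i h1 h2
      rcases Nat.lt_or_ge i (n+1) with h | h
      · rw [hcnt]; exact ih (fun i j a b c => hs i j a b (by omega)) i h1 (by omega)
      · have : i = n+1 := by omega
        subst this
        rw [hf', hcnt]
        have : ¬ (n+1 ≤ (List.range' 1 n).countP f) := by omega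
        simp [this]

lemma countP_decide_le (c n : ℕ) :
    (List.range' 1 n).countP (fun j => decide (j ≤ c)) = min c n := by
  induction n with
  | zero => simp
  | succ n ih =>
    rw [range'_concat1, List.countP_append, ih]
    by_cases h : 1 + n ≤ c <;> simp [h] <;> omega

lemma count_true_map (f : ℕ → Bool) (n : ℕ) :
    ((List.range' 1 n).map f).count true = (List.range' 1 n).countP f := by
  simp [List.count_eq_countP, List.countP_map, Function.comp_def]

lemma bool_comb_even (a b c d : Bool) : max (max a b) (min c d) = (a || b || (c && d)) := by
  cases a <;> cases b <;> cases c <;> cases d <;> rfl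

lemma bool_comb_odd (a b c d : Bool) : min (max a b) (min c d) = ((a || b) && (c && d)) := by
  cases a <;> cases b <;> cases c <;> cases d <;> rfl

lemma count_false_add (l : List Bool) : l.count false + l.count true = l.length := by
  induction l with
  | nil => simp
  | cons b t ih => cases b <;> simp [List.count_cons] <;> omega

/-- Correctness of the combine operation of the 4-Odd-Even Merging Network
(1-based indexing: `x 1, ..., x lx` and `y 1, ..., y ly` are the sorted inputs).
Given the out-of-range conventions `X`/`Y` and the definition of `a` by the two simulated
comparator layers, the result `a` is sorted (non-increasing) and is a permutation of the
concatenation of the inputs. -/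
theorem stmt10 (k lx ly : ℕ) (x y : ℕ → Bool)
    (hk : k ≤ lx + ly)
    (hlx : lx ≤ k / 2 + 2) (hly : ly ≤ k / 2)
    (hxs : ∀ i j, 1 ≤ i → i ≤ j → j ≤ lx → x j ≤ x i)
    (hys : ∀ i j, 1 ≤ i → i ≤ j → j ≤ ly → y j ≤ y i)
    (hc1 : ((List.range' 1 ly).map y).count true ≤ ((List.range' 1 lx).map x).count true)
    (hc2 : ((List.range' 1 lx).map x).count true ≤ ((List.range' 1 ly).map y).count true + 4)
    (X Y : ℕ → Bool)
    (hX : ∀ i, X i = if 1 ≤ i ∧ i ≤ lx then x i else false)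
    (hY : ∀ i, Y i = if i < 1 then true else if i ≤ ly then y i else false)
    (a : ℕ → Bool)
    (haeven : ∀ i, 1 ≤ i → 2 * i ≤ lx + ly →
      a (2 * i) = max (max (X (i + 2)) (Y i)) (min (X (i + 1)) (Y (i - 1))))
    (haodd : ∀ i, 1 ≤ i → 2 * i - 1 ≤ lx + ly →
      a (2 * i - 1) = min (max (X (i + 1)) (Y (i - 1))) (min (X i) (Y (i - 2)))) :
    (∀ i j, 1 ≤ i → i ≤ j → j ≤ lx + ly → a j ≤ a i) ∧
    List.Perm ((List.range' 1 (lx + ly)).map a)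
      (((List.range' 1 lx).map x) ++ ((List.range' 1 ly).map y)) := by
  set p := (List.range' 1 lx).countP x with hp_def
  set q := (List.range' 1 ly).countP y with hq_def
  have hp_le : p ≤ lx := by
    have := List.countP_le_length (l := List.range' 1 lx) (p := x); simpa using this
  have hq_le : q ≤ ly := by
    have := List.countP_le_length (l := List.range' 1 ly) (p := y); simpa using this
  have hcx : ((List.range' 1 lx).map x).count true = p := count_true_map x lx
  have hcy : ((List.range' 1 ly).map y).count true = q := count_true_map y ly
  have hqp : q ≤ p := by rw [hcx, hcy] at hc1; exact hc1
  have hpq4 : p ≤ q + 4 := by rw [hcx, hcy] at hc2; exact hc2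
  have hxc : ∀ i, 1 ≤ i → i ≤ lx → x i = decide (i ≤ p) := sorted_char lx x hxs
  have hyc : ∀ i, 1 ≤ i → i ≤ ly → y i = decide (i ≤ q) := sorted_char ly y hys
  -- characterizations of X and Y
  have hXc : ∀ i, X i = decide (1 ≤ i ∧ i ≤ p) := by
    intro i
    rw [hX]
    by_cases h : 1 ≤ i ∧ i ≤ lx
    · rw [if_pos h, hxc i h.1 h.2]
      by_cases h1 : i ≤ p <;> simp [h1, h.1]
    · rw [if_neg h]
      have : ¬ (1 ≤ i ∧ i ≤ p) := by omega
      simp [this]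
  have hYc : ∀ i, Y i = decide (i ≤ q) := by
    intro i
    rw [hY]
    by_cases h0 : i < 1
    · have : i = 0 := by omega
      simp [this]
    · rw [if_neg h0]
      by_cases h1 : i ≤ ly
      · rw [if_pos h1, hyc i (by omega) h1]
      · rw [if_neg h1]
        have : ¬ (i ≤ q) := by omega
        simp [this]
  -- main computation: a j = decide (j ≤ p + q) on [1, lx+ly]
  have hA : ∀ j, 1 ≤ j → j ≤ lx + ly → a j = decide (j ≤ p + q) := by
    intro j h1 h2
    rcases Nat.even_or_odd j with ⟨i, hi⟩ | ⟨i, hi⟩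
    · -- j = 2*i, i ≥ 1
      have hj : j = 2 * i := by omega
      have hi1 : 1 ≤ i := by omega
      rw [hj, haeven i hi1 (by omega), bool_comb_even, hXc, hXc, hYc, hYc]
      simp only [← Bool.decide_or, ← Bool.decide_and]
      rw [decide_eq_decide]
      constructor
      · rintro ((h | h) | ⟨h, h'⟩) <;> omega
      · intro h
        by_cases hq' : i ≤ q
        · omega
        · by_cases hp' : i + 2 ≤ p
          · omega
          · exact Or.inr ⟨⟨by omega, by omega⟩, by omega⟩
    · -- j = 2*i+1 = 2*(i+1) - 1
      have hj : j = 2 * (i+1) - 1 := by omega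
      have hi1 : 1 ≤ i + 1 := by omega
      rw [hj, haodd (i+1) hi1 (by omega), bool_comb_odd, hXc, hXc, hYc, hYc]
      simp only [← Bool.decide_or, ← Bool.decide_and]
      rw [decide_eq_decide]
      constructor
      · rintro ⟨(h | h), ⟨h1', h2'⟩, h3⟩ <;> omega
      · intro h
        refine ⟨?_, ⟨by omega, by omega⟩, by omega⟩
        by_cases hq' : (i+1) - 1 ≤ q
        · right; exact hq'
        · left; omega
  constructor
  · -- sortedness
    intro i j h1 h2 h3
    rw [hA i h1 (by omega), hA j (by omega) h3]
    by_cases hj : j ≤ p + q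
    · have : i ≤ p + q := by omega
      simp [hj, this]
    · simp [hj]
  · -- permutation
    rw [List.perm_iff_count]
    intro b
    have hlenL : ((List.range' 1 (lx + ly)).map a).length = lx + ly := by simp
    have hlenR : (((List.range' 1 lx).map x) ++ ((List.range' 1 ly).map y)).length = lx + ly := by
      simp
    have hcountL : ((List.range' 1 (lx + ly)).map a).count true = p + q := by
      rw [count_true_map]
      have : (List.range' 1 (lx + ly)).countP a
          = (List.range' 1 (lx + ly)).countP (fun j => decide (j ≤ p + q)) := by
        apply List.countP_congr
        intro m hm
        have := List.mem_range'_1.mp hm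
        simp only [hA m this.1 (by omega)]
      rw [this, countP_decide_le]
      omega
    have hcountR : (((List.range' 1 lx).map x) ++ ((List.range' 1 ly).map y)).count true
        = p + q := by
      rw [List.count_append, hcx, hcy]
    cases b
    · have h1 := count_false_add ((List.range' 1 (lx + ly)).map a)
      have h2 := count_false_add (((List.range' 1 lx).map x) ++ ((List.range' 1 ly).map y))
      omega
    · rw [hcountL, hcountR]
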